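/- Let (C, W) be a category with weak equivalences such that every weak equivalence is a composition of weak equivalences that are split (i.e. sections or retractions). Then every weak equivalence f : X → Y is a homotopy equivalence: there exists g : Y → X with γ(gf) = id_X and γ(fg) = id_Y in the localization Ho(C), i.e. gf ∼_W id_X and fg ∼_W id_Y. -/
import Mathlib


open CategoryTheory

variable {C : Type*} [Category C]

/-- Arrows that are finite composites of split weak equivalences. -/
inductive SplitGenChain (W : MorphismProperty C) : ∀ {X Y : C}, (X ⟶ Y) → Prop
  | of {X Y : C} (f : X ⟶ Y) (hW : W f) (hs : IsSplitMono f ∨ IsSplitEpi f) :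
      SplitGenChain W f
  | comp {X Y Z : C} {f : X ⟶ Y} {g : Y ⟶ Z} :
      SplitGenChain W f → SplitGenChain W g → SplitGenChain W (f ≫ g)

/-- A category with weak equivalences is split-generated when every weak equivalence is a
finite composite of split weak equivalences. -/
def SplitGenerated (W : MorphismProperty C) : Prop :=
  ∀ ⦃X Y : C⦄ (f : X ⟶ Y), W f → SplitGenChain W f

lemma splitGenChain_inverse (W : MorphismProperty C) {X Y : C} {f : X ⟶ Y}
    (h : SplitGenChain W f) :
    ∃ g : Y ⟶ X, W.Q.map f ≫ W.Q.map g = 𝟙 _ ∧ W.Q.map g ≫ W.Q.map f = 𝟙 _ := by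
  induction h with
  | of f hW hs =>
    have hiso : IsIso (W.Q.map f) := Localization.inverts W.Q W f hW
    rcases hs with h | h
    · refine ⟨retraction f, ?_, ?_⟩
      · rw [← W.Q.map_comp, IsSplitMono.id, W.Q.map_id]
      · have e : W.Q.map f ≫ W.Q.map (retraction f) = 𝟙 _ := by
          rw [← W.Q.map_comp, IsSplitMono.id, W.Q.map_id]
        rw [IsIso.eq_inv_of_hom_inv_id e, IsIso.inv_hom_id]
    · refine ⟨section_ f, ?_, ?_⟩
      · have e : W.Q.map (section_ f) ≫ W.Q.map f = 𝟙 _ := by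
          rw [← W.Q.map_comp, IsSplitEpi.id, W.Q.map_id]
        rw [IsIso.eq_inv_of_inv_hom_id e, IsIso.hom_inv_id]
      · rw [← W.Q.map_comp, IsSplitEpi.id, W.Q.map_id]
  | comp hf hg ihf ihg =>
    obtain ⟨g₁, hg₁, hg₁'⟩ := ihf
    obtain ⟨g₂, hg₂, hg₂'⟩ := ihg
    refine ⟨g₂ ≫ g₁, ?_, ?_⟩
    · rw [W.Q.map_comp, W.Q.map_comp]
      slice_lhs 2 3 => rw [hg₂]
      rw [Category.id_comp, hg₁]
    · rw [W.Q.map_comp, W.Q.map_comp]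
      slice_lhs 2 3 => rw [hg₁']
      rw [Category.id_comp, hg₂']

/-- Proposition 3.14, Whitehead condition (3): in a split-generated category with weak
equivalences, every weak equivalence `f : X ⟶ Y` is a homotopy equivalence: there is
`g : Y ⟶ X` with `gf ∼_W id_X` and `fg ∼_W id_Y`, i.e. `γ(gf) = id` and `γ(fg) = id`. -/
theorem stmt6 (W : MorphismProperty C) [W.ContainsIdentities]
    [W.HasTwoOutOfThreeProperty] (hsg : SplitGenerated W)
    {X Y : C} (f : X ⟶ Y) (hf : W f) :
    ∃ g : Y ⟶ X, W.Q.map (f ≫ g) = W.Q.map (𝟙 X) ∧ W.Q.map (g ≫ f) = W.Q.map (𝟙 Y) := by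
  obtain ⟨g, h1, h2⟩ := splitGenChain_inverse W (hsg f hf)
  exact ⟨g, by rw [W.Q.map_comp, h1, W.Q.map_id], by rw [W.Q.map_comp, h2, W.Q.map_id]⟩
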